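/- Let m be a positive integer, X a simplicial set, φ : X ⟶ Δ_{Z_m} a simplicial map, and p ∈ sDist(X, Δ_{Z_m}). Then Vsupp(φ·p) = φ·Vsupp(p); that is, a simplicial distribution r on (X, Δ_{Z_m}) is a vertex of sDist(X, Δ_{Z_m}) with r ⪯ φ·p if and only if r = φ·q for some vertex q of sDist(X, Δ_{Z_m}) with q ⪯ p. -/

import Mathlib

open CategoryTheory Simplicial Opposite
open scoped NNReal BigOperators

universe u

/-- A distribution on a type `S`: a finitely supported function to `ℝ≥0` with total sum 1. -/
structure FDist (S : Type u) : Type u where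
  toFun : S → ℝ≥0
  finite_support : (Function.support toFun).Finite
  sum_one : ∑ᶠ s, toFun s = 1

/-- A simplicial distribution on the simplicial scenario `(X, Y)`. -/
structure SDist (X Y : SSet.{u}) : Type u where
  d : ∀ n : ℕ, X _⦋n⦌ → FDist (Y _⦋n⦌)
  compat : ∀ {k n : ℕ} (α : (⦋k⦌ : SimplexCategory) ⟶ ⦋n⦌) (x : X _⦋n⦌) (y : Y _⦋k⦌),
    (d k (X.map α.op x)).toFun y = ∑ᶠ y' ∈ {y' : Y _⦋n⦌ | Y.map α.op y' = y}, (d n x).toFun y'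

/-- The simplicial set `Δ_{ℤ_m}` whose `n`-simplices are functions `Fin (n+1) → ZMod m`. -/
def DeltaZ (m : ℕ) : SSet.{0} where
  obj U := Fin (U.unop.len + 1) → ZMod m
  map α := TypeCat.ofHom (fun a => a ∘ α.unop.toOrderHom)
  map_id := by intros; rfl
  map_comp := by intros; rfl

/-- The disjoint union `⊔_{ℤ_m} Δ_{ℤ_m}` of `m` copies of `Δ_{ℤ_m}`. -/
def DeltaZSum (m : ℕ) : SSet.{0} where
  obj U := ZMod m × (Fin (U.unop.len + 1) → ZMod m)
  map α := TypeCat.ofHom (fun x => (x.1, x.2 ∘ α.unop.toOrderHom))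
  map_id := by intros; rfl
  map_comp := by intros; rfl

instance (m : ℕ) (U : SimplexCategoryᵒᵖ) : AddCommGroup ((DeltaZ m).obj U) :=
  Pi.addCommGroup

/-- The edge relation on vertices of a simplicial set. -/
def EdgeRel (X : SSet.{u}) (a b : X _⦋0⦌) : Prop :=
  ∃ σ : X _⦋1⦌, X.δ 1 σ = a ∧ X.δ 0 σ = b

/-- A simplicial set is connected if any two vertices are related by the equivalence
relation generated by the edge relation. -/
def SConnected (X : SSet.{u}) : Prop :=
  ∀ a b : X _⦋0⦌, Relation.EqvGen (EdgeRel X) a b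

/-- A simplicial distribution is noncontextual if it is a mixture of deterministic
distributions. -/
def Noncontextual {X Y : SSet.{u}} (p : SDist X Y) : Prop :=
  ∃ Q : FDist (X ⟶ Y), ∀ (n : ℕ) (x : X _⦋n⦌) (y : Y _⦋n⦌),
    (p.d n x).toFun y = ∑ᶠ φ ∈ setOf (fun φ : X ⟶ Y => φ.app (op ⦋n⦌) x = y), Q.toFun φ

/-- A vertex (extreme point) of the convex set of simplicial distributions. -/
def IsVertex {X Y : SSet.{u}} (p : SDist X Y) : Prop :=
  ∀ (q q' : SDist X Y) (t : ℝ), 0 < t → t < 1 →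
    (∀ (n : ℕ) (x : X _⦋n⦌) (y : Y _⦋n⦌),
      ((p.d n x).toFun y : ℝ) = t * ((q.d n x).toFun y : ℝ) + (1 - t) * ((q'.d n x).toFun y : ℝ)) →
    q = q'

/-- `q ⪯ p` : the support of `q` is contained in that of `p`. -/
def Pre {X Y : SSet.{u}} (q p : SDist X Y) : Prop :=
  ∀ (n : ℕ) (x : X _⦋n⦌) (y : Y _⦋n⦌), (q.d n x).toFun y ≠ 0 → (p.d n x).toFun y ≠ 0
/-- `r = φ·p`: the simplicial distribution `r` is the translate of `p` by the simplicial
map `φ : X ⟶ Δ_{ℤ_m}`, i.e. `r_x(y) = p_x(y − φ_x)`. -/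
def ActEq {m : ℕ} {X : SSet.{0}} (φ : X ⟶ DeltaZ m) (p r : SDist X (DeltaZ m)) : Prop :=
  ∀ (n : ℕ) (x : X _⦋n⦌) (y : (DeltaZ m) _⦋n⦌),
    (r.d n x).toFun y = (p.d n x).toFun (y - φ.app (op ⦋n⦌) x)


namespace Helper
variable {m : ℕ} {X : SSet.{0}}

theorem FDist.ext' {S : Type} {f g : FDist S} (h : ∀ s, f.toFun s = g.toFun s) : f = g := by
  cases f; cases g
  simp only [FDist.mk.injEq]
  exact funext h

theorem SDist.ext' {q q' : SDist X (DeltaZ m)}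
    (h : ∀ n x y, (q.d n x).toFun y = (q'.d n x).toFun y) : q = q' := by
  cases q; cases q'
  simp only [SDist.mk.injEq]
  funext n x
  exact FDist.ext' (h n x)

theorem nat (ψ : X ⟶ DeltaZ m) {k n : ℕ} (α : (⦋k⦌ : SimplexCategory) ⟶ ⦋n⦌) (x : X _⦋n⦌) :
    ψ.app (op ⦋k⦌) (X.map α.op x) = (DeltaZ m).map α.op (ψ.app (op ⦋n⦌) x) :=
  FunctorToTypes.naturality ψ α.op x

theorem map_sub {k n : ℕ} (α : (⦋k⦌ : SimplexCategory) ⟶ ⦋n⦌) (a b : (DeltaZ m) _⦋n⦌) :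
    (DeltaZ m).map α.op (a - b) = (DeltaZ m).map α.op a - (DeltaZ m).map α.op b := rfl

/-- Translation of a simplicial distribution by a simplicial map into `Δ_{ℤ_m}`. -/
def trans (ψ : X ⟶ DeltaZ m) (q : SDist X (DeltaZ m)) : SDist X (DeltaZ m) where
  d n x :=
    { toFun := fun y => (q.d n x).toFun (y - ψ.app (op ⦋n⦌) x)
      finite_support := by
        have : Function.support (fun y => (q.d n x).toFun (y - ψ.app (op ⦋n⦌) x)) =
            (Equiv.subRight (ψ.app (op ⦋n⦌) x)) ⁻¹' (Function.support (q.d n x).toFun) := rfl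
        rw [this]
        exact (q.d n x).finite_support.preimage (Equiv.injective _).injOn
      sum_one := by
        rw [← (q.d n x).sum_one]
        exact finsum_comp_equiv (Equiv.subRight (ψ.app (op ⦋n⦌) x)) }
  compat := by
    intro k n α x y
    show (q.d k (X.map α.op x)).toFun (y - ψ.app (op ⦋k⦌) (X.map α.op x)) = _
    rw [q.compat α x]
    refine finsum_mem_eq_of_bijOn (fun y' => y' + ψ.app (op ⦋n⦌) x) ?_ ?_
    · constructor
      · intro y' hy'
        simp only [Set.mem_setOf_eq] at hy' ⊢
        rw [show (DeltaZ m).map α.op (y' + ψ.app (op ⦋n⦌) x)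
            = (DeltaZ m).map α.op y' + (DeltaZ m).map α.op (ψ.app (op ⦋n⦌) x) from rfl,
          hy', nat ψ α x]
        abel
      constructor
      · exact fun a _ b _ h => by simpa using h
      · intro y'' hy''
        refine ⟨y'' - ψ.app (op ⦋n⦌) x, ?_, sub_add_cancel y'' _⟩
        simp only [Set.mem_setOf_eq] at hy'' ⊢
        rw [map_sub, hy'', nat ψ α x]
    · intro y' _
      simp

theorem trans_apply (ψ : X ⟶ DeltaZ m) (q : SDist X (DeltaZ m)) (n : ℕ) (x : X _⦋n⦌)
    (y : (DeltaZ m) _⦋n⦌) :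
    ((trans ψ q).d n x).toFun y = (q.d n x).toFun (y - ψ.app (op ⦋n⦌) x) := rfl

/-- Negation of a simplicial map into `Δ_{ℤ_m}`. -/
def negMap (ψ : X ⟶ DeltaZ m) : X ⟶ DeltaZ m where
  app U := TypeCat.ofHom (fun x => - ψ.app U x)
  naturality U V f := by
    ext x
    show - ψ.app V (X.map f x) = (DeltaZ m).map f (- ψ.app U x)
    rw [show (DeltaZ m).map f (- ψ.app U x) = -((DeltaZ m).map f (ψ.app U x)) from rfl,
      FunctorToTypes.naturality ψ f x]

theorem isVertex_trans {ψ : X ⟶ DeltaZ m} {q : SDist X (DeltaZ m)} (h : IsVertex q) :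
    IsVertex (trans ψ q) := by
  intro q1 q2 t ht ht1 hcomb
  have key : trans (negMap ψ) q1 = trans (negMap ψ) q2 := by
    apply h _ _ t ht ht1
    intro n x y
    have hc := hcomb n x (y + ψ.app (op ⦋n⦌) x)
    rw [trans_apply, add_sub_cancel_right] at hc
    rw [trans_apply, trans_apply]
    show ((q.d n x).toFun y : ℝ)
      = t * ((q1.d n x).toFun (y - - ψ.app (op ⦋n⦌) x) : ℝ)
        + (1 - t) * ((q2.d n x).toFun (y - - ψ.app (op ⦋n⦌) x) : ℝ)
    rw [sub_neg_eq_add]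
    exact hc
  calc q1 = trans ψ (trans (negMap ψ) q1) := by
        apply SDist.ext'
        intro n x y
        rw [trans_apply, trans_apply]
        show _ = (q1.d n x).toFun (y - ψ.app (op ⦋n⦌) x - - ψ.app (op ⦋n⦌) x)
        rw [sub_neg_eq_add, sub_add_cancel]
    _ = trans ψ (trans (negMap ψ) q2) := by rw [key]
    _ = q2 := by
        apply SDist.ext'
        intro n x y
        rw [trans_apply, trans_apply]
        show (q2.d n x).toFun (y - ψ.app (op ⦋n⦌) x - - ψ.app (op ⦋n⦌) x) = _
        rw [sub_neg_eq_add, sub_add_cancel]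

end Helper

/-- Proposition 2.25: `Vsupp(φ·p) = φ·Vsupp(p)`: a simplicial distribution `r` is a
vertex with `r ⪯ φ·p` iff `r = φ·q` for some vertex `q` with `q ⪯ p`. -/
theorem stmt12 (m : ℕ) [NeZero m] (X : SSet.{0}) (φ : X ⟶ DeltaZ m)
    (p p' : SDist X (DeltaZ m)) (hp' : ActEq φ p p') (r : SDist X (DeltaZ m)) :
    (IsVertex r ∧ Pre r p') ↔
      ∃ q : SDist X (DeltaZ m), IsVertex q ∧ Pre q p ∧ ActEq φ q r := by
  constructor
  · rintro ⟨hv, hpre⟩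
    refine ⟨Helper.trans (Helper.negMap φ) r, Helper.isVertex_trans hv, ?_, ?_⟩
    · intro n x y h
      rw [Helper.trans_apply] at h
      have h' : (r.d n x).toFun (y + φ.app (op ⦋n⦌) x) ≠ 0 := by
        rwa [show y - (Helper.negMap φ).app (op ⦋n⦌) x = y + φ.app (op ⦋n⦌) x by
          show y - - φ.app (op ⦋n⦌) x = _; rw [sub_neg_eq_add]] at h
      have hne := hpre n x _ h'
      rwa [hp' n x (y + φ.app (op ⦋n⦌) x), add_sub_cancel_right] at hne
    · intro n x y
      rw [Helper.trans_apply]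
      show _ = (r.d n x).toFun (y - φ.app (op ⦋n⦌) x - - φ.app (op ⦋n⦌) x)
      rw [sub_neg_eq_add, sub_add_cancel]
  · rintro ⟨q, hv, hpre, hact⟩
    have hr : r = Helper.trans φ q := by
      apply Helper.SDist.ext'
      intro n x y
      rw [Helper.trans_apply]
      exact hact n x y
    subst hr
    refine ⟨Helper.isVertex_trans hv, ?_⟩
    intro n x y h
    rw [Helper.trans_apply] at h
    have hne := hpre n x _ h
    rwa [hp' n x y]
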